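/- Let c > 0 and let f, g : [0, τ] → ℝ be functions with sup_{u ∈ [0,τ]} |f(u) − g(u)| ≤ c/4. Let s, t ∈ [0, τ] be such that f(t) − f(s) ≥ c. Then g(t) − g(s) ≥ (f(t) − f(s))/2 > 0, and with h(x) = x(log x − 1) + 1, one has h((f(t) − f(s))/(g(t) − g(s))) ≥ (1/3)·((f(t) − f(s))/(g(t) − g(s)) − 1)². -/

import Mathlib

private lemma psi_deriv (y : ℝ) (hy : 0 < y) :
    HasDerivAt (fun z : ℝ => Real.log z - z/3 - 1/3 + (2/3) * z⁻¹)
      (y⁻¹ - 1/3 + (2/3) * (-(y^2)⁻¹)) y := by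
  have h1 := Real.hasDerivAt_log hy.ne'
  have h2 : HasDerivAt (fun z : ℝ => z/3) (1/3) y := by
    simpa using (hasDerivAt_id y).div_const 3
  have h3 : HasDerivAt (fun z : ℝ => (2/3 : ℝ) * z⁻¹) ((2/3) * (-(y^2)⁻¹)) y :=
    (hasDerivAt_inv hy.ne').const_mul (2/3)
  have := ((h1.sub h2).sub (hasDerivAt_const y (1/3 : ℝ))).add h3
  exact this.congr_deriv (by ring)

private lemma psi_nonneg (x : ℝ) (h1 : 2/3 ≤ x) (h2 : x ≤ 2) :
    0 ≤ Real.log x - x/3 - 1/3 + (2/3) * x⁻¹ := by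
  set F : ℝ → ℝ := fun z => Real.log z - z/3 - 1/3 + (2/3) * z⁻¹ with hF
  have hF1 : F 1 = 0 := by simp [hF]; norm_num
  rcases le_total 1 x with hx1 | hx1
  · -- monotone on [1,2]
    have hmono : MonotoneOn F (Set.Icc (1:ℝ) 2) := by
      apply monotoneOn_of_deriv_nonneg (convex_Icc 1 2)
      · intro y hy
        have hy0 : (0:ℝ) < y := lt_of_lt_of_le one_pos hy.1
        exact (psi_deriv y hy0).continuousAt.continuousWithinAt
      · intro y hy
        rw [interior_Icc] at hy
        have hy0 : (0:ℝ) < y := lt_trans one_pos hy.1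
        exact (psi_deriv y hy0).differentiableAt.differentiableWithinAt
      · intro y hy
        rw [interior_Icc] at hy
        have hy0 : (0:ℝ) < y := lt_trans one_pos hy.1
        rw [(psi_deriv y hy0).deriv]
        have h : y⁻¹ - 1/3 + (2/3) * (-(y^2)⁻¹) = (y-1)*(2-y) / (3*y^2) := by
          field_simp; ring
        rw [h]
        apply div_nonneg
        · nlinarith [hy.1.le, hy.2.le]
        · positivity
    have := hmono (Set.mem_Icc.mpr ⟨le_refl 1, le_trans hx1 h2⟩)
      (Set.mem_Icc.mpr ⟨hx1, h2⟩) hx1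
    rw [hF1] at this
    exact this
  · -- antitone on [2/3,1]
    have hanti : AntitoneOn F (Set.Icc (2/3:ℝ) 1) := by
      apply antitoneOn_of_deriv_nonpos (convex_Icc (2/3) 1)
      · intro y hy
        have hy0 : (0:ℝ) < y := lt_of_lt_of_le (by norm_num) hy.1
        exact (psi_deriv y hy0).continuousAt.continuousWithinAt
      · intro y hy
        rw [interior_Icc] at hy
        have hy0 : (0:ℝ) < y := lt_trans (by norm_num) hy.1
        exact (psi_deriv y hy0).differentiableAt.differentiableWithinAt
      · intro y hy
        rw [interior_Icc] at hy
        have hy0 : (0:ℝ) < y := lt_trans (by norm_num) hy.1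
        rw [(psi_deriv y hy0).deriv]
        have h : y⁻¹ - 1/3 + (2/3) * (-(y^2)⁻¹) = -((1-y)*(2-y)) / (3*y^2) := by
          field_simp; ring
        rw [h]
        apply div_nonpos_of_nonpos_of_nonneg
        · nlinarith [hy.1.le, hy.2.le]
        · positivity
    have := hanti (Set.mem_Icc.mpr ⟨h1, hx1⟩)
      (Set.mem_Icc.mpr ⟨le_trans h1 hx1, le_refl 1⟩) hx1
    rw [hF1] at this
    exact this

private lemma key_log_bound (x : ℝ) (h1 : 2/3 ≤ x) (h2 : x ≤ 2) :
    (x - 1) * (x + 2) / (3 * x) ≤ Real.log x := by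
  have hx0 : (0:ℝ) < x := lt_of_lt_of_le (by norm_num) h1
  have h := psi_nonneg x h1 h2
  have hx : x ≠ 0 := hx0.ne'
  rw [div_le_iff₀ (by positivity)]
  have hinv : (2/3 : ℝ) * x⁻¹ * x = 2/3 := by
    field_simp
  nlinarith [h, mul_pos hx0 hx0, sq_nonneg x, hinv]

/-- Claim 1 in full form (radius of contraction): if `f` and `g` are uniformly within
`c/4` of each other on `[0, τ]` and the increment `f(t) − f(s)` is at least `c`, then
`g(t) − g(s) ≥ (f(t) − f(s))/2 > 0` and
`h((f(t) − f(s))/(g(t) − g(s))) ≥ (1/3)((f(t) − f(s))/(g(t) − g(s)) − 1)²`,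
where `h(x) = x(log x − 1) + 1`. -/
theorem radius_of_contraction (c τ : ℝ) (hc : 0 < c) (f g : ℝ → ℝ)
    (hfg : ∀ u ∈ Set.Icc (0 : ℝ) τ, |f u - g u| ≤ c / 4)
    (s t : ℝ) (hs : s ∈ Set.Icc (0 : ℝ) τ) (ht : t ∈ Set.Icc (0 : ℝ) τ)
    (hinc : f t - f s ≥ c) :
    g t - g s ≥ (f t - f s) / 2 ∧ 0 < g t - g s ∧
      ((f t - f s) / (g t - g s)) * (Real.log ((f t - f s) / (g t - g s)) - 1) + 1 ≥
        (1 / 3) * ((f t - f s) / (g t - g s) - 1) ^ 2 := by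
  have hbt := abs_le.mp (hfg t ht)
  have hbs := abs_le.mp (hfg s hs)
  set A := f t - f s with hA
  set B := g t - g s with hB
  have hAc : c ≤ A := hinc
  have hBlow : A / 2 ≤ B := by
    have : B = A - (f t - g t) + (f s - g s) := by rw [hA, hB]; ring
    rw [this]; linarith [hbt.2, hbs.1]
  have hBpos : 0 < B := lt_of_lt_of_le (by linarith) hBlow
  have hBhigh : B ≤ 3 * A / 2 := by
    have : B = A - (f t - g t) + (f s - g s) := by rw [hA, hB]; ring
    rw [this]; linarith [hbt.1, hbs.2]
  have hApos : 0 < A := by linarith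
  refine ⟨hBlow, hBpos, ?_⟩
  set x := A / B with hx
  have hx1 : 2/3 ≤ x := by
    rw [hx, le_div_iff₀ hBpos]; linarith
  have hx2 : x ≤ 2 := by
    rw [hx, div_le_iff₀ hBpos]; linarith
  have hx0 : (0:ℝ) < x := lt_of_lt_of_le (by norm_num) hx1
  have hkey := key_log_bound x hx1 hx2
  have hmul : (x - 1) * (x + 2) / 3 ≤ x * Real.log x := by
    have := mul_le_mul_of_nonneg_right hkey hx0.le
    calc (x - 1) * (x + 2) / 3 = (x - 1) * (x + 2) / (3 * x) * x := by
          field_simp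
      _ ≤ Real.log x * x := this
      _ = x * Real.log x := mul_comm _ _
  nlinarith [hmul]
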